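/- With the setup of the 3-wise intersection matrix M (pairwise disjoint A, B, C ⊆ [n], |A|+|B|+|C| = 2s, each of size ≤ s): a monomial ∏_{a∈A} x_a^{t_a} ∏_{b∈B} x_b^{t_b} ∏_{c∈C} x_c^{t_c} appears with nonzero coefficient in det(M) if and only if (1) the multiset {t_a : a∈A} ∪ {t_b : b∈B} ∪ {t_c : c∈C} of size 2s contains each integer 0 ≤ i ≤ s-1 exactly twice, and (2) the exponents within each of A, B, C are pairwise distinct. Moreover every nonzero coefficient is ±1. -/

import Mathlib

open MvPolynomial

/-- The 3-wise intersection matrix: top `s` rows `(I_s | I_s | I_s)`, and below a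
block-diagonal matrix with Vandermonde blocks `V_s(x_a : a ∈ A)`, `V_s(x_b : b ∈ B)`,
`V_s(x_c : c ∈ C)`, over the polynomial ring `F[x_1,...,x_n]`. -/
noncomputable def M3 (F : Type*) [Field F] (n s : ℕ) (A B C : Finset (Fin n)) :
    Matrix (Fin s ⊕ ({a // a ∈ A} ⊕ {b // b ∈ B} ⊕ {c // c ∈ C}))
      (Fin s ⊕ (Fin s ⊕ Fin s)) (MvPolynomial (Fin n) F) :=
  fun r c =>
    match r, c with
    | Sum.inl i, Sum.inl j => if i = j then 1 else 0
    | Sum.inl i, Sum.inr (Sum.inl j) => if i = j then 1 else 0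
    | Sum.inl i, Sum.inr (Sum.inr j) => if i = j then 1 else 0
    | Sum.inr (Sum.inl a), Sum.inl j => MvPolynomial.X a.1 ^ (j : ℕ)
    | Sum.inr (Sum.inl _), Sum.inr _ => 0
    | Sum.inr (Sum.inr (Sum.inl b)), Sum.inr (Sum.inl j) => MvPolynomial.X b.1 ^ (j : ℕ)
    | Sum.inr (Sum.inr (Sum.inl _)), Sum.inl _ => 0
    | Sum.inr (Sum.inr (Sum.inl _)), Sum.inr (Sum.inr _) => 0
    | Sum.inr (Sum.inr (Sum.inr c')), Sum.inr (Sum.inr j) => MvPolynomial.X c'.1 ^ (j : ℕ)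
    | Sum.inr (Sum.inr (Sum.inr _)), Sum.inl _ => 0
    | Sum.inr (Sum.inr (Sum.inr _)), Sum.inr (Sum.inl _) => 0

abbrev Rows3 (n s : ℕ) (A B C : Finset (Fin n)) :=
  Fin s ⊕ ({a // a ∈ A} ⊕ {b // b ∈ B} ⊕ {c // c ∈ C})
abbrev Cols3 (s : ℕ) := Fin s ⊕ (Fin s ⊕ Fin s)

noncomputable def Dent (n s : ℕ) (A B C : Finset (Fin n)) :
    Rows3 n s A B C → Cols3 s → (Fin n →₀ ℕ)
  | Sum.inr (Sum.inl a), Sum.inl j => Finsupp.single a.1 (j : ℕ)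
  | Sum.inr (Sum.inr (Sum.inl b)), Sum.inr (Sum.inl j) => Finsupp.single b.1 (j : ℕ)
  | Sum.inr (Sum.inr (Sum.inr c)), Sum.inr (Sum.inr j) => Finsupp.single c.1 (j : ℕ)
  | _, _ => 0

section aux
variable {F : Type*} [Field F] {n s : ℕ} {A B C : Finset (Fin n)}

lemma ent_struct (r : Rows3 n s A B C) (c : Cols3 s) (h : M3 F n s A B C r c ≠ 0) :
    M3 F n s A B C r c = monomial (Dent n s A B C r c) 1 := by
  rcases r with i | (a | b | c') <;> rcases c with j | (j | j) <;>
    simp only [M3, Dent] at h ⊢ <;>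
    first
      | (rcases eq_or_ne i j with rfl | hne
         · simp [monomial_zero']
         · simp [hne] at h)
      | exact X_pow_eq_monomial
      | exact absurd rfl h

lemma top_col (i : Fin s) (c : Cols3 s) (h : M3 F n s A B C (Sum.inl i) c ≠ 0) :
    c = Sum.inl i ∨ c = Sum.inr (Sum.inl i) ∨ c = Sum.inr (Sum.inr i) := by
  rcases c with j | (j | j) <;> simp only [M3] at h <;>
    rcases eq_or_ne i j with rfl | hne
  · exact Or.inl rfl
  · simp [hne] at h
  · exact Or.inr (Or.inl rfl)
  · simp [hne] at h
  · exact Or.inr (Or.inr rfl)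
  · simp [hne] at h

lemma rowA_col (a : {a // a ∈ A}) (c : Cols3 s)
    (h : M3 F n s A B C (Sum.inr (Sum.inl a)) c ≠ 0) : ∃ j : Fin s, c = Sum.inl j := by
  rcases c with j | (j | j) <;> simp only [M3] at h
  · exact ⟨j, rfl⟩
  · exact absurd rfl h
  · exact absurd rfl h

lemma rowB_col (b : {b // b ∈ B}) (c : Cols3 s)
    (h : M3 F n s A B C (Sum.inr (Sum.inr (Sum.inl b))) c ≠ 0) :
    ∃ j : Fin s, c = Sum.inr (Sum.inl j) := by
  rcases c with j | (j | j) <;> simp only [M3] at h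
  · exact absurd rfl h
  · exact ⟨j, rfl⟩
  · exact absurd rfl h

lemma rowC_col (c' : {c // c ∈ C}) (c : Cols3 s)
    (h : M3 F n s A B C (Sum.inr (Sum.inr (Sum.inr c'))) c ≠ 0) :
    ∃ j : Fin s, c = Sum.inr (Sum.inr j) := by
  rcases c with j | (j | j) <;> simp only [M3] at h
  · exact absurd rfl h
  · exact absurd rfl h
  · exact ⟨j, rfl⟩

lemma colA_row (r : Rows3 n s A B C) (j : Fin s) (h : M3 F n s A B C r (Sum.inl j) ≠ 0) :
    r = Sum.inl j ∨ ∃ a, r = Sum.inr (Sum.inl a) := by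
  rcases r with i | (a | b | c') <;> simp only [M3] at h
  · rcases eq_or_ne i j with rfl | hne
    · exact Or.inl rfl
    · simp [hne] at h
  · exact Or.inr ⟨a, rfl⟩
  · exact absurd rfl h
  · exact absurd rfl h

lemma colB_row (r : Rows3 n s A B C) (j : Fin s)
    (h : M3 F n s A B C r (Sum.inr (Sum.inl j)) ≠ 0) :
    r = Sum.inl j ∨ ∃ b, r = Sum.inr (Sum.inr (Sum.inl b)) := by
  rcases r with i | (a | b | c') <;> simp only [M3] at h
  · rcases eq_or_ne i j with rfl | hne
    · exact Or.inl rfl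
    · simp [hne] at h
  · exact absurd rfl h
  · exact Or.inr ⟨b, rfl⟩
  · exact absurd rfl h

lemma colC_row (r : Rows3 n s A B C) (j : Fin s)
    (h : M3 F n s A B C r (Sum.inr (Sum.inr j)) ≠ 0) :
    r = Sum.inl j ∨ ∃ c', r = Sum.inr (Sum.inr (Sum.inr c')) := by
  rcases r with i | (a | b | c') <;> simp only [M3] at h
  · rcases eq_or_ne i j with rfl | hne
    · exact Or.inl rfl
    · simp [hne] at h
  · exact absurd rfl h
  · exact absurd rfl h
  · exact Or.inr ⟨c', rfl⟩

lemma prod_monomial {ι : Type*} (t : Finset ι) (f : ι → (Fin n →₀ ℕ)) :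
    (∏ i ∈ t, (monomial (f i) (1 : F))) = monomial (∑ i ∈ t, f i) 1 := by
  classical
  induction t using Finset.induction_on with
  | empty => simp
  | insert _ _ hx ih =>
      rw [Finset.prod_insert hx, Finset.sum_insert hx, ih, monomial_mul, one_mul]

lemma term_struct (e : Cols3 s ≃ Rows3 n s A B C) (mon : Fin n →₀ ℕ)
    (σ : Equiv.Perm (Cols3 s))
    (h : coeff mon (∏ c : Cols3 s, M3 F n s A B C (e (σ c)) c) ≠ 0) :
    (∀ c, M3 F n s A B C (e (σ c)) c ≠ 0) ∧
    mon = (∑ c : Cols3 s, Dent n s A B C (e (σ c)) c) ∧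
    coeff mon (∏ c : Cols3 s, M3 F n s A B C (e (σ c)) c) = 1 := by
  classical
  have hp : (∏ c : Cols3 s, M3 F n s A B C (e (σ c)) c) ≠ 0 := fun h0 => h (by simp [h0])
  rw [Finset.prod_ne_zero_iff] at hp
  have hne : ∀ c, M3 F n s A B C (e (σ c)) c ≠ 0 := fun c => hp c (Finset.mem_univ c)
  have hprod : (∏ c : Cols3 s, M3 F n s A B C (e (σ c)) c)
      = monomial (∑ c : Cols3 s, Dent n s A B C (e (σ c)) c) 1 := by
    rw [← prod_monomial]
    exact Finset.prod_congr rfl (fun c _ => ent_struct _ _ (hne c))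
  rw [hprod, coeff_monomial] at h
  split at h
  case isTrue h' => exact ⟨hne, h'.symm, by rw [hprod, coeff_monomial, if_pos h']⟩
  case isFalse => exact absurd rfl h

lemma Dent_a (a : Fin n) (ha : a ∈ A) (hB : a ∉ B) (hC : a ∉ C)
    (r' : Rows3 n s A B C) (c : Cols3 s) (hne : r' ≠ Sum.inr (Sum.inl ⟨a, ha⟩)) :
    (Dent n s A B C r' c) a = 0 := by
  rcases r' with i | (a' | b' | c') <;> rcases c with j | (j | j) <;>
    simp only [Dent, Finsupp.coe_zero, Pi.zero_apply, Finsupp.single_apply] <;>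
    rw [if_neg]
  · rintro rfl; exact hne (by simp)
  · rintro rfl; exact hB b'.2
  · rintro rfl; exact hC c'.2

lemma Dent_b (b : Fin n) (hb : b ∈ B) (hA' : b ∉ A) (hC : b ∉ C)
    (r' : Rows3 n s A B C) (c : Cols3 s)
    (hne : r' ≠ Sum.inr (Sum.inr (Sum.inl ⟨b, hb⟩))) :
    (Dent n s A B C r' c) b = 0 := by
  rcases r' with i | (a' | b' | c') <;> rcases c with j | (j | j) <;>
    simp only [Dent, Finsupp.coe_zero, Pi.zero_apply, Finsupp.single_apply] <;>
    rw [if_neg]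
  · rintro rfl; exact hA' a'.2
  · rintro rfl; exact hne (by simp)
  · rintro rfl; exact hC c'.2

lemma Dent_c (c0 : Fin n) (hc : c0 ∈ C) (hA' : c0 ∉ A) (hB : c0 ∉ B)
    (r' : Rows3 n s A B C) (c : Cols3 s)
    (hne : r' ≠ Sum.inr (Sum.inr (Sum.inr ⟨c0, hc⟩))) :
    (Dent n s A B C r' c) c0 = 0 := by
  rcases r' with i | (a' | b' | c') <;> rcases c with j | (j | j) <;>
    simp only [Dent, Finsupp.coe_zero, Pi.zero_apply, Finsupp.single_apply] <;>
    rw [if_neg]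
  · rintro rfl; exact hA' a'.2
  · rintro rfl; exact hB b'.2
  · rintro rfl; exact hne (by simp)

lemma L1A (e : Cols3 s ≃ Rows3 n s A B C) (mon : Fin n →₀ ℕ)
    (σ : Equiv.Perm (Cols3 s))
    (H : ∀ c, M3 F n s A B C (e (σ c)) c ≠ 0)
    (Hm : mon = ∑ c : Cols3 s, Dent n s A B C (e (σ c)) c)
    (a : Fin n) (ha : a ∈ A) (haB : a ∉ B) (haC : a ∉ C) :
    ∃ h : mon a < s, e (σ (Sum.inl ⟨mon a, h⟩)) = Sum.inr (Sum.inl ⟨a, ha⟩) := by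
  classical
  set r : Rows3 n s A B C := Sum.inr (Sum.inl ⟨a, ha⟩) with hr
  set c₀ : Cols3 s := σ.symm (e.symm r) with hc₀
  have he : e (σ c₀) = r := by simp [hc₀]
  have hMne : M3 F n s A B C r c₀ ≠ 0 := he ▸ H c₀
  obtain ⟨j, hj⟩ := rowA_col ⟨a, ha⟩ c₀ hMne
  have hma : mon a = (j : ℕ) := by
    have h1 : mon a = ∑ c : Cols3 s, (Dent n s A B C (e (σ c)) c) a := by
      rw [Hm]; exact Finsupp.finset_sum_apply _ _ _
    rw [h1, Finset.sum_eq_single c₀]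
    · rw [he, hj]; simp [Dent, hr]
    · intro c _ hc
      refine Dent_a a ha haB haC _ _ (fun hh => hc ?_)
      have : e (σ c) = e (σ c₀) := by rw [he, hh]
      exact σ.injective (e.injective this)
    · intro h; exact absurd (Finset.mem_univ c₀) h
  have hlt : mon a < s := hma ▸ j.2
  refine ⟨hlt, ?_⟩
  have : (Sum.inl ⟨mon a, hlt⟩ : Cols3 s) = c₀ := by rw [hj]; congr 1; exact Fin.ext hma
  rw [this, he]

lemma L1B (e : Cols3 s ≃ Rows3 n s A B C) (mon : Fin n →₀ ℕ)
    (σ : Equiv.Perm (Cols3 s))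
    (H : ∀ c, M3 F n s A B C (e (σ c)) c ≠ 0)
    (Hm : mon = ∑ c : Cols3 s, Dent n s A B C (e (σ c)) c)
    (b : Fin n) (hb : b ∈ B) (hbA : b ∉ A) (hbC : b ∉ C) :
    ∃ h : mon b < s,
      e (σ (Sum.inr (Sum.inl ⟨mon b, h⟩))) = Sum.inr (Sum.inr (Sum.inl ⟨b, hb⟩)) := by
  classical
  set r : Rows3 n s A B C := Sum.inr (Sum.inr (Sum.inl ⟨b, hb⟩)) with hr
  set c₀ : Cols3 s := σ.symm (e.symm r) with hc₀
  have he : e (σ c₀) = r := by simp [hc₀]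
  have hMne : M3 F n s A B C r c₀ ≠ 0 := he ▸ H c₀
  obtain ⟨j, hj⟩ := rowB_col ⟨b, hb⟩ c₀ hMne
  have hma : mon b = (j : ℕ) := by
    have h1 : mon b = ∑ c : Cols3 s, (Dent n s A B C (e (σ c)) c) b := by
      rw [Hm]; exact Finsupp.finset_sum_apply _ _ _
    rw [h1, Finset.sum_eq_single c₀]
    · rw [he, hj]; simp [Dent, hr]
    · intro c _ hc
      refine Dent_b b hb hbA hbC _ _ (fun hh => hc ?_)
      have : e (σ c) = e (σ c₀) := by rw [he, hh]
      exact σ.injective (e.injective this)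
    · intro h; exact absurd (Finset.mem_univ c₀) h
  have hlt : mon b < s := hma ▸ j.2
  refine ⟨hlt, ?_⟩
  have : (Sum.inr (Sum.inl ⟨mon b, hlt⟩) : Cols3 s) = c₀ := by
    rw [hj]; congr 2; exact Fin.ext hma
  rw [this, he]

lemma L1C (e : Cols3 s ≃ Rows3 n s A B C) (mon : Fin n →₀ ℕ)
    (σ : Equiv.Perm (Cols3 s))
    (H : ∀ c, M3 F n s A B C (e (σ c)) c ≠ 0)
    (Hm : mon = ∑ c : Cols3 s, Dent n s A B C (e (σ c)) c)
    (c0 : Fin n) (hc : c0 ∈ C) (hcA : c0 ∉ A) (hcB : c0 ∉ B) :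
    ∃ h : mon c0 < s,
      e (σ (Sum.inr (Sum.inr ⟨mon c0, h⟩))) = Sum.inr (Sum.inr (Sum.inr ⟨c0, hc⟩)) := by
  classical
  set r : Rows3 n s A B C := Sum.inr (Sum.inr (Sum.inr ⟨c0, hc⟩)) with hr
  set c₀ : Cols3 s := σ.symm (e.symm r) with hc₀
  have he : e (σ c₀) = r := by simp [hc₀]
  have hMne : M3 F n s A B C r c₀ ≠ 0 := he ▸ H c₀
  obtain ⟨j, hj⟩ := rowC_col ⟨c0, hc⟩ c₀ hMne
  have hma : mon c0 = (j : ℕ) := by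
    have h1 : mon c0 = ∑ c : Cols3 s, (Dent n s A B C (e (σ c)) c) c0 := by
      rw [Hm]; exact Finsupp.finset_sum_apply _ _ _
    rw [h1, Finset.sum_eq_single c₀]
    · rw [he, hj]; simp [Dent, hr]
    · intro c _ hc'
      refine Dent_c c0 hc hcA hcB _ _ (fun hh => hc' ?_)
      have : e (σ c) = e (σ c₀) := by rw [he, hh]
      exact σ.injective (e.injective this)
    · intro h; exact absurd (Finset.mem_univ c₀) h
  have hlt : mon c0 < s := hma ▸ j.2
  refine ⟨hlt, ?_⟩
  have : (Sum.inr (Sum.inr ⟨mon c0, hlt⟩) : Cols3 s) = c₀ := by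
    rw [hj]; congr 2; exact Fin.ext hma
  rw [this, he]

section two
variable (e : Cols3 s ≃ Rows3 n s A B C) (mon : Fin n →₀ ℕ)

lemma L2A (hAB : Disjoint A B) (hAC : Disjoint A C) (hBC : Disjoint B C)
    (σ : Equiv.Perm (Cols3 s))
    (H : ∀ c, M3 F n s A B C (e (σ c)) c ≠ 0)
    (Hm : mon = ∑ c : Cols3 s, Dent n s A B C (e (σ c)) c) (t : Fin s) :
    e (σ (Sum.inl t)) = Sum.inl t ↔ ¬ ∃ a ∈ A, mon a = (t : ℕ) := by
  constructor
  · rintro h ⟨a, ha, hma⟩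
    obtain ⟨hlt, he'⟩ := L1A e mon σ H Hm a ha (Finset.disjoint_left.mp hAB ha)
      (Finset.disjoint_left.mp hAC ha)
    have ht : (Sum.inl ⟨mon a, hlt⟩ : Cols3 s) = Sum.inl t := by
      congr 1; exact Fin.ext hma
    rw [ht, h] at he'
    simp at he'
  · intro hnu
    rcases colA_row (e (σ (Sum.inl t))) t (H (Sum.inl t)) with h | ⟨a, hA2⟩
    · exact h
    · exfalso
      obtain ⟨hlt, he'⟩ := L1A e mon σ H Hm a.1 a.2 (Finset.disjoint_left.mp hAB a.2)
        (Finset.disjoint_left.mp hAC a.2)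
    -- he' : e (σ (inl ⟨mon a.1⟩)) = inr (inl a)
      have hc : (Sum.inl (⟨mon a.1, hlt⟩ : Fin s) : Cols3 s) = Sum.inl t := by
        apply σ.injective
        apply e.injective
        rw [he', hA2]
      have : mon a.1 = (t : ℕ) := congrArg Fin.val (Sum.inl.inj hc)
      exact hnu ⟨a.1, a.2, this⟩

lemma L2B (hAB : Disjoint A B) (hAC : Disjoint A C) (hBC : Disjoint B C)
    (σ : Equiv.Perm (Cols3 s))
    (H : ∀ c, M3 F n s A B C (e (σ c)) c ≠ 0)
    (Hm : mon = ∑ c : Cols3 s, Dent n s A B C (e (σ c)) c) (t : Fin s) :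
    e (σ (Sum.inr (Sum.inl t))) = Sum.inl t ↔ ¬ ∃ b ∈ B, mon b = (t : ℕ) := by
  constructor
  · rintro h ⟨b, hb, hmb⟩
    obtain ⟨hlt, he'⟩ := L1B e mon σ H Hm b hb (Finset.disjoint_right.mp hAB hb)
      (Finset.disjoint_left.mp hBC hb)
    have ht : (Sum.inr (Sum.inl ⟨mon b, hlt⟩) : Cols3 s) = Sum.inr (Sum.inl t) := by
      congr 2; exact Fin.ext hmb
    rw [ht, h] at he'
    simp at he'
  · intro hnu
    rcases colB_row (e (σ (Sum.inr (Sum.inl t)))) t (H (Sum.inr (Sum.inl t))) with h | ⟨b, hB2⟩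
    · exact h
    · exfalso
      obtain ⟨hlt, he'⟩ := L1B e mon σ H Hm b.1 b.2 (Finset.disjoint_right.mp hAB b.2)
        (Finset.disjoint_left.mp hBC b.2)
      have hc : (Sum.inr (Sum.inl (⟨mon b.1, hlt⟩ : Fin s)) : Cols3 s)
          = Sum.inr (Sum.inl t) := by
        apply σ.injective
        apply e.injective
        rw [he', hB2]
      have : mon b.1 = (t : ℕ) := congrArg Fin.val (Sum.inl.inj (Sum.inr.inj hc))
      exact hnu ⟨b.1, b.2, this⟩

lemma L2C (hAB : Disjoint A B) (hAC : Disjoint A C) (hBC : Disjoint B C)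
    (σ : Equiv.Perm (Cols3 s))
    (H : ∀ c, M3 F n s A B C (e (σ c)) c ≠ 0)
    (Hm : mon = ∑ c : Cols3 s, Dent n s A B C (e (σ c)) c) (t : Fin s) :
    e (σ (Sum.inr (Sum.inr t))) = Sum.inl t ↔ ¬ ∃ c0 ∈ C, mon c0 = (t : ℕ) := by
  constructor
  · rintro h ⟨c0, hc, hmc⟩
    obtain ⟨hlt, he'⟩ := L1C e mon σ H Hm c0 hc (Finset.disjoint_right.mp hAC hc)
      (Finset.disjoint_right.mp hBC hc)
    have ht : (Sum.inr (Sum.inr ⟨mon c0, hlt⟩) : Cols3 s) = Sum.inr (Sum.inr t) := by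
      congr 2; exact Fin.ext hmc
    rw [ht, h] at he'
    simp at he'
  · intro hnu
    rcases colC_row (e (σ (Sum.inr (Sum.inr t)))) t (H (Sum.inr (Sum.inr t))) with h | ⟨c0, hC2⟩
    · exact h
    · exfalso
      obtain ⟨hlt, he'⟩ := L1C e mon σ H Hm c0.1 c0.2 (Finset.disjoint_right.mp hAC c0.2)
        (Finset.disjoint_right.mp hBC c0.2)
      have hc : (Sum.inr (Sum.inr (⟨mon c0.1, hlt⟩ : Fin s)) : Cols3 s)
          = Sum.inr (Sum.inr t) := by
        apply σ.injective
        apply e.injective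
        rw [he', hC2]
      have : mon c0.1 = (t : ℕ) := congrArg Fin.val (Sum.inr.inj (Sum.inr.inj hc))
      exact hnu ⟨c0.1, c0.2, this⟩

lemma cardA_filter (hAB : Disjoint A B) (hAC : Disjoint A C) (hBC : Disjoint B C)
    (σ : Equiv.Perm (Cols3 s))
    (H : ∀ c, M3 F n s A B C (e (σ c)) c ≠ 0)
    (Hm : mon = ∑ c : Cols3 s, Dent n s A B C (e (σ c)) c) (t : Fin s) :
    (A.filter (fun x => mon x = (t : ℕ))).card
      = if e (σ (Sum.inl t)) = Sum.inl t then 0 else 1 := by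
  classical
  split
  case isTrue h =>
    rw [Finset.card_eq_zero, Finset.filter_eq_empty_iff]
    intro x hx hmx
    exact ((L2A e mon hAB hAC hBC σ H Hm t).mp h) ⟨x, hx, hmx⟩
  case isFalse h =>
    have hu : ∃ a ∈ A, mon a = (t : ℕ) := by
      by_contra hnu
      exact h ((L2A e mon hAB hAC hBC σ H Hm t).mpr hnu)
    obtain ⟨a, ha, hma⟩ := hu
    rw [Finset.card_eq_one]
    refine ⟨a, ?_⟩
    ext x
    simp only [Finset.mem_filter, Finset.mem_singleton]
    constructor
    · rintro ⟨hx, hmx⟩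
      obtain ⟨l1, h1⟩ := L1A e mon σ H Hm x hx (Finset.disjoint_left.mp hAB hx)
        (Finset.disjoint_left.mp hAC hx)
      obtain ⟨l2, h2⟩ := L1A e mon σ H Hm a ha (Finset.disjoint_left.mp hAB ha)
        (Finset.disjoint_left.mp hAC ha)
      have : (Sum.inl (⟨mon x, l1⟩ : Fin s) : Cols3 s) = Sum.inl ⟨mon a, l2⟩ := by
        congr 1; exact Fin.ext (hmx.trans hma.symm)
      rw [this] at h1
      rw [h1] at h2
      exact congrArg Subtype.val (Sum.inl.inj (Sum.inr.inj h2))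
    · rintro rfl; exact ⟨ha, hma⟩

lemma cardB_filter (hAB : Disjoint A B) (hAC : Disjoint A C) (hBC : Disjoint B C)
    (σ : Equiv.Perm (Cols3 s))
    (H : ∀ c, M3 F n s A B C (e (σ c)) c ≠ 0)
    (Hm : mon = ∑ c : Cols3 s, Dent n s A B C (e (σ c)) c) (t : Fin s) :
    (B.filter (fun x => mon x = (t : ℕ))).card
      = if e (σ (Sum.inr (Sum.inl t))) = Sum.inl t then 0 else 1 := by
  classical
  split
  case isTrue h =>
    rw [Finset.card_eq_zero, Finset.filter_eq_empty_iff]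
    intro x hx hmx
    exact ((L2B e mon hAB hAC hBC σ H Hm t).mp h) ⟨x, hx, hmx⟩
  case isFalse h =>
    have hu : ∃ b ∈ B, mon b = (t : ℕ) := by
      by_contra hnu
      exact h ((L2B e mon hAB hAC hBC σ H Hm t).mpr hnu)
    obtain ⟨a, ha, hma⟩ := hu
    rw [Finset.card_eq_one]
    refine ⟨a, ?_⟩
    ext x
    simp only [Finset.mem_filter, Finset.mem_singleton]
    constructor
    · rintro ⟨hx, hmx⟩
      obtain ⟨l1, h1⟩ := L1B e mon σ H Hm x hx (Finset.disjoint_right.mp hAB hx)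
        (Finset.disjoint_left.mp hBC hx)
      obtain ⟨l2, h2⟩ := L1B e mon σ H Hm a ha (Finset.disjoint_right.mp hAB ha)
        (Finset.disjoint_left.mp hBC ha)
      have : (Sum.inr (Sum.inl (⟨mon x, l1⟩ : Fin s)) : Cols3 s)
          = Sum.inr (Sum.inl ⟨mon a, l2⟩) := by
        congr 2; exact Fin.ext (hmx.trans hma.symm)
      rw [this] at h1
      rw [h1] at h2
      exact congrArg Subtype.val (Sum.inl.inj (Sum.inr.inj (Sum.inr.inj h2)))
    · rintro rfl; exact ⟨ha, hma⟩

lemma cardC_filter (hAB : Disjoint A B) (hAC : Disjoint A C) (hBC : Disjoint B C)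
    (σ : Equiv.Perm (Cols3 s))
    (H : ∀ c, M3 F n s A B C (e (σ c)) c ≠ 0)
    (Hm : mon = ∑ c : Cols3 s, Dent n s A B C (e (σ c)) c) (t : Fin s) :
    (C.filter (fun x => mon x = (t : ℕ))).card
      = if e (σ (Sum.inr (Sum.inr t))) = Sum.inl t then 0 else 1 := by
  classical
  split
  case isTrue h =>
    rw [Finset.card_eq_zero, Finset.filter_eq_empty_iff]
    intro x hx hmx
    exact ((L2C e mon hAB hAC hBC σ H Hm t).mp h) ⟨x, hx, hmx⟩
  case isFalse h =>
    have hu : ∃ c0 ∈ C, mon c0 = (t : ℕ) := by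
      by_contra hnu
      exact h ((L2C e mon hAB hAC hBC σ H Hm t).mpr hnu)
    obtain ⟨a, ha, hma⟩ := hu
    rw [Finset.card_eq_one]
    refine ⟨a, ?_⟩
    ext x
    simp only [Finset.mem_filter, Finset.mem_singleton]
    constructor
    · rintro ⟨hx, hmx⟩
      obtain ⟨l1, h1⟩ := L1C e mon σ H Hm x hx (Finset.disjoint_right.mp hAC hx)
        (Finset.disjoint_right.mp hBC hx)
      obtain ⟨l2, h2⟩ := L1C e mon σ H Hm a ha (Finset.disjoint_right.mp hAC ha)
        (Finset.disjoint_right.mp hBC ha)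
      have : (Sum.inr (Sum.inr (⟨mon x, l1⟩ : Fin s)) : Cols3 s)
          = Sum.inr (Sum.inr ⟨mon a, l2⟩) := by
        congr 2; exact Fin.ext (hmx.trans hma.symm)
      rw [this] at h1
      rw [h1] at h2
      exact congrArg Subtype.val (Sum.inr.inj (Sum.inr.inj (Sum.inr.inj h2)))
    · rintro rfl; exact ⟨ha, hma⟩

lemma count_of (hAB : Disjoint A B) (hAC : Disjoint A C) (hBC : Disjoint B C)
    (σ : Equiv.Perm (Cols3 s))
    (H : ∀ c, M3 F n s A B C (e (σ c)) c ≠ 0)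
    (Hm : mon = ∑ c : Cols3 s, Dent n s A B C (e (σ c)) c) (i : ℕ) (hi : i < s) :
    ((A ∪ B ∪ C).filter fun x => mon x = i).card = 2 := by
  classical
  set t : Fin s := ⟨i, hi⟩ with hti
  have hit : i = (t : ℕ) := rfl
  have hsplit : ((A ∪ B ∪ C).filter fun x => mon x = i).card
      = (A.filter (fun x => mon x = (t : ℕ))).card
        + (B.filter (fun x => mon x = (t : ℕ))).card
        + (C.filter (fun x => mon x = (t : ℕ))).card := by
    rw [hit, Finset.filter_union, Finset.filter_union,
      Finset.card_union_of_disjoint, Finset.card_union_of_disjoint]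
    · exact Finset.disjoint_filter_filter hAB
    · exact Finset.disjoint_union_left.mpr
        ⟨Finset.disjoint_filter_filter hAC, Finset.disjoint_filter_filter hBC⟩
  set c₀ : Cols3 s := σ.symm (e.symm (Sum.inl t)) with hc₀
  have he : e (σ c₀) = Sum.inl t := by simp [hc₀]
  have key : ∀ x : Cols3 s, e (σ x) = Sum.inl t ↔ x = c₀ := fun x =>
    ⟨fun h => σ.injective (e.injective (h.trans he.symm)), fun h => h ▸ he⟩
  rw [hsplit, cardA_filter e mon hAB hAC hBC σ H Hm t, cardB_filter e mon hAB hAC hBC σ H Hm t,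
    cardC_filter e mon hAB hAC hBC σ H Hm t]
  rcases top_col t c₀ (he ▸ H c₀) with h1 | h1 | h1
  · rw [if_pos ((key _).mpr h1.symm),
      if_neg (fun h => by have := ((key _).mp h).trans h1; simp at this),
      if_neg (fun h => by have := ((key _).mp h).trans h1; simp at this)]
  · rw [if_neg (fun h => by have := ((key _).mp h).trans h1; simp at this),
      if_pos ((key _).mpr h1.symm),
      if_neg (fun h => by have := ((key _).mp h).trans h1; simp at this)]
  · rw [if_neg (fun h => by have := ((key _).mp h).trans h1; simp at this),
      if_neg (fun h => by have := ((key _).mp h).trans h1; simp at this),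
      if_pos ((key _).mpr h1.symm)]

lemma injA_of (hAB : Disjoint A B) (hAC : Disjoint A C) (hBC : Disjoint B C)
    (σ : Equiv.Perm (Cols3 s))
    (H : ∀ c, M3 F n s A B C (e (σ c)) c ≠ 0)
    (Hm : mon = ∑ c : Cols3 s, Dent n s A B C (e (σ c)) c) :
    Set.InjOn mon ↑A := by
  intro x hx y hy hxy
  rw [Finset.mem_coe] at hx hy
  obtain ⟨l1, h1⟩ := L1A e mon σ H Hm x hx (Finset.disjoint_left.mp hAB hx)
    (Finset.disjoint_left.mp hAC hx)
  obtain ⟨l2, h2⟩ := L1A e mon σ H Hm y hy (Finset.disjoint_left.mp hAB hy)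
    (Finset.disjoint_left.mp hAC hy)
  have : (Sum.inl (⟨mon x, l1⟩ : Fin s) : Cols3 s) = Sum.inl ⟨mon y, l2⟩ := by
    congr 1; exact Fin.ext hxy
  rw [this, h2] at h1
  exact (congrArg Subtype.val (Sum.inl.inj (Sum.inr.inj h1))).symm

lemma injB_of (hAB : Disjoint A B) (hAC : Disjoint A C) (hBC : Disjoint B C)
    (σ : Equiv.Perm (Cols3 s))
    (H : ∀ c, M3 F n s A B C (e (σ c)) c ≠ 0)
    (Hm : mon = ∑ c : Cols3 s, Dent n s A B C (e (σ c)) c) :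
    Set.InjOn mon ↑B := by
  intro x hx y hy hxy
  rw [Finset.mem_coe] at hx hy
  obtain ⟨l1, h1⟩ := L1B e mon σ H Hm x hx (Finset.disjoint_right.mp hAB hx)
    (Finset.disjoint_left.mp hBC hx)
  obtain ⟨l2, h2⟩ := L1B e mon σ H Hm y hy (Finset.disjoint_right.mp hAB hy)
    (Finset.disjoint_left.mp hBC hy)
  have : (Sum.inr (Sum.inl (⟨mon x, l1⟩ : Fin s)) : Cols3 s) = Sum.inr (Sum.inl ⟨mon y, l2⟩) := by
    congr 2; exact Fin.ext hxy
  rw [this, h2] at h1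
  exact (congrArg Subtype.val (Sum.inl.inj (Sum.inr.inj (Sum.inr.inj h1)))).symm

lemma injC_of (hAB : Disjoint A B) (hAC : Disjoint A C) (hBC : Disjoint B C)
    (σ : Equiv.Perm (Cols3 s))
    (H : ∀ c, M3 F n s A B C (e (σ c)) c ≠ 0)
    (Hm : mon = ∑ c : Cols3 s, Dent n s A B C (e (σ c)) c) :
    Set.InjOn mon ↑C := by
  intro x hx y hy hxy
  rw [Finset.mem_coe] at hx hy
  obtain ⟨l1, h1⟩ := L1C e mon σ H Hm x hx (Finset.disjoint_right.mp hAC hx)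
    (Finset.disjoint_right.mp hBC hx)
  obtain ⟨l2, h2⟩ := L1C e mon σ H Hm y hy (Finset.disjoint_right.mp hAC hy)
    (Finset.disjoint_right.mp hBC hy)
  have : (Sum.inr (Sum.inr (⟨mon x, l1⟩ : Fin s)) : Cols3 s) = Sum.inr (Sum.inr ⟨mon y, l2⟩) := by
    congr 2; exact Fin.ext hxy
  rw [this, h2] at h1
  exact (congrArg Subtype.val (Sum.inr.inj (Sum.inr.inj (Sum.inr.inj h1)))).symm

lemma uniq_of (hAB : Disjoint A B) (hAC : Disjoint A C) (hBC : Disjoint B C)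
    (σ τ : Equiv.Perm (Cols3 s))
    (Hσ : ∀ c, M3 F n s A B C (e (σ c)) c ≠ 0)
    (Hmσ : mon = ∑ c : Cols3 s, Dent n s A B C (e (σ c)) c)
    (Hτ : ∀ c, M3 F n s A B C (e (τ c)) c ≠ 0)
    (Hmτ : mon = ∑ c : Cols3 s, Dent n s A B C (e (τ c)) c) : σ = τ := by
  apply Equiv.ext
  intro c
  apply e.injective
  rcases c with t | (t | t)
  · by_cases hu : ∃ a ∈ A, mon a = (t : ℕ)
    · obtain ⟨a, ha, hma⟩ := hu
      obtain ⟨l1, h1⟩ := L1A e mon σ Hσ Hmσ a ha (Finset.disjoint_left.mp hAB ha)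
        (Finset.disjoint_left.mp hAC ha)
      obtain ⟨l2, h2⟩ := L1A e mon τ Hτ Hmτ a ha (Finset.disjoint_left.mp hAB ha)
        (Finset.disjoint_left.mp hAC ha)
      have ht : (Sum.inl (⟨mon a, l1⟩ : Fin s) : Cols3 s) = Sum.inl t := by
        congr 1; exact Fin.ext hma
      rw [ht] at h1 h2
      rw [h1, h2]
    · rw [(L2A e mon hAB hAC hBC σ Hσ Hmσ t).mpr hu, (L2A e mon hAB hAC hBC τ Hτ Hmτ t).mpr hu]
  · by_cases hu : ∃ b ∈ B, mon b = (t : ℕ)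
    · obtain ⟨b, hb, hmb⟩ := hu
      obtain ⟨l1, h1⟩ := L1B e mon σ Hσ Hmσ b hb (Finset.disjoint_right.mp hAB hb)
        (Finset.disjoint_left.mp hBC hb)
      obtain ⟨l2, h2⟩ := L1B e mon τ Hτ Hmτ b hb (Finset.disjoint_right.mp hAB hb)
        (Finset.disjoint_left.mp hBC hb)
      have ht : (Sum.inr (Sum.inl (⟨mon b, l1⟩ : Fin s)) : Cols3 s) = Sum.inr (Sum.inl t) := by
        congr 2; exact Fin.ext hmb
      rw [ht] at h1 h2
      rw [h1, h2]
    · rw [(L2B e mon hAB hAC hBC σ Hσ Hmσ t).mpr hu, (L2B e mon hAB hAC hBC τ Hτ Hmτ t).mpr hu]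
  · by_cases hu : ∃ c0 ∈ C, mon c0 = (t : ℕ)
    · obtain ⟨c0, hc, hmc⟩ := hu
      obtain ⟨l1, h1⟩ := L1C e mon σ Hσ Hmσ c0 hc (Finset.disjoint_right.mp hAC hc)
        (Finset.disjoint_right.mp hBC hc)
      obtain ⟨l2, h2⟩ := L1C e mon τ Hτ Hmτ c0 hc (Finset.disjoint_right.mp hAC hc)
        (Finset.disjoint_right.mp hBC hc)
      have ht : (Sum.inr (Sum.inr (⟨mon c0, l1⟩ : Fin s)) : Cols3 s) = Sum.inr (Sum.inr t) := by
        congr 2; exact Fin.ext hmc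
      rw [ht] at h1 h2
      rw [h1, h2]
    · rw [(L2C e mon hAB hAC hBC σ Hσ Hmσ t).mpr hu, (L2C e mon hAB hAC hBC τ Hτ Hmτ t).mpr hu]

end two

open Classical in
noncomputable def gfun (n s : ℕ) (A B C : Finset (Fin n)) (mon : Fin n →₀ ℕ) :
    Cols3 s → Rows3 n s A B C
  | Sum.inl t => if h : ∃ a ∈ A, mon a = (t : ℕ)
      then Sum.inr (Sum.inl ⟨h.choose, h.choose_spec.1⟩) else Sum.inl t
  | Sum.inr (Sum.inl t) => if h : ∃ b ∈ B, mon b = (t : ℕ)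
      then Sum.inr (Sum.inr (Sum.inl ⟨h.choose, h.choose_spec.1⟩)) else Sum.inl t
  | Sum.inr (Sum.inr t) => if h : ∃ c0 ∈ C, mon c0 = (t : ℕ)
      then Sum.inr (Sum.inr (Sum.inr ⟨h.choose, h.choose_spec.1⟩)) else Sum.inl t

lemma card_union_split (hAB : Disjoint A B) (hAC : Disjoint A C) (hBC : Disjoint B C)
    (p : Fin n → Prop) [DecidablePred p] :
    ((A ∪ B ∪ C).filter p).card
      = (A.filter p).card + (B.filter p).card + (C.filter p).card := by
  rw [Finset.filter_union, Finset.filter_union, Finset.card_union_of_disjoint,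
    Finset.card_union_of_disjoint]
  · exact Finset.disjoint_filter_filter hAB
  · exact Finset.disjoint_union_left.mpr
      ⟨Finset.disjoint_filter_filter hAC, Finset.disjoint_filter_filter hBC⟩

lemma card_filter_le_one (mon : Fin n →₀ ℕ) (X : Finset (Fin n))
    (hinj : Set.InjOn mon ↑X) (i : ℕ) :
    (X.filter (fun x => mon x = i)).card ≤ 1 := by
  classical
  rw [Finset.card_le_one]
  intro a ha b hb
  simp only [Finset.mem_filter] at ha hb
  exact hinj (Finset.mem_coe.mpr ha.1) (Finset.mem_coe.mpr hb.1) (ha.2.trans hb.2.symm)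

lemma used_two (mon : Fin n →₀ ℕ)
    (hAB : Disjoint A B) (hAC : Disjoint A C) (hBC : Disjoint B C)
    (hcount : ∀ i < s, ((A ∪ B ∪ C).filter fun x => mon x = i).card = 2)
    (hiA : Set.InjOn mon ↑A) (hiB : Set.InjOn mon ↑B) (hiC : Set.InjOn mon ↑C)
    (t : Fin s) :
    ((∃ a ∈ A, mon a = (t : ℕ)) ∨ ∃ b ∈ B, mon b = (t : ℕ)) ∧
    ((∃ a ∈ A, mon a = (t : ℕ)) ∨ ∃ c0 ∈ C, mon c0 = (t : ℕ)) ∧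
    ((∃ b ∈ B, mon b = (t : ℕ)) ∨ ∃ c0 ∈ C, mon c0 = (t : ℕ)) := by
  classical
  have h2 := hcount (t : ℕ) t.2
  rw [card_union_split hAB hAC hBC] at h2
  have hA1 := card_filter_le_one mon A hiA (t : ℕ)
  have hB1 := card_filter_le_one mon B hiB (t : ℕ)
  have hC1 := card_filter_le_one mon C hiC (t : ℕ)
  have eq0 : ∀ X : Finset (Fin n), (∀ x ∈ X, ¬ mon x = (t : ℕ)) →
      (X.filter fun x => mon x = (t : ℕ)).card = 0 := fun X hX =>
    Finset.card_eq_zero.mpr (Finset.filter_eq_empty_iff.mpr hX)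
  refine ⟨?_, ?_, ?_⟩
  · by_contra hn
    push_neg at hn
    have e1 := eq0 A hn.1
    have e2 := eq0 B hn.2
    omega
  · by_contra hn
    push_neg at hn
    have e1 := eq0 A hn.1
    have e2 := eq0 C hn.2
    omega
  · by_contra hn
    push_neg at hn
    have e1 := eq0 B hn.1
    have e2 := eq0 C hn.2
    omega

lemma mon_lt (mon : Fin n →₀ ℕ)
    (hAB : Disjoint A B) (hAC : Disjoint A C) (hBC : Disjoint B C)
    (hsum : A.card + B.card + C.card = 2 * s)
    (hcount : ∀ i < s, ((A ∪ B ∪ C).filter fun x => mon x = i).card = 2)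
    (x : Fin n) (hx : x ∈ A ∪ B ∪ C) : mon x < s := by
  classical
  have hcardU : (A ∪ B ∪ C).card = 2 * s := by
    rw [Finset.card_union_of_disjoint (Finset.disjoint_union_left.mpr ⟨hAC, hBC⟩),
      Finset.card_union_of_disjoint hAB]
    exact hsum
  set V := (Finset.range s).biUnion (fun i => (A ∪ B ∪ C).filter fun x => mon x = i)
    with hV
  have hVU : V ⊆ A ∪ B ∪ C := by
    intro y hy
    simp only [hV, Finset.mem_biUnion, Finset.mem_filter] at hy
    obtain ⟨i, _, hyU, _⟩ := hy
    exact hyU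
  have hcardV : V.card = 2 * s := by
    rw [hV, Finset.card_biUnion]
    · rw [Finset.sum_congr rfl (fun i hi => hcount i (Finset.mem_range.mp hi))]
      simp [mul_comm]
    · intro i _ j _ hij
      simp only [Finset.disjoint_left, Finset.mem_filter]
      rintro y ⟨-, hyi⟩ ⟨-, hyj⟩
      exact hij (hyi.symm.trans hyj)
  have hVeq : V = A ∪ B ∪ C :=
    Finset.eq_of_subset_of_card_le hVU (by omega)
  rw [← hVeq] at hx
  simp only [hV, Finset.mem_biUnion, Finset.mem_filter, Finset.mem_range] at hx
  obtain ⟨i, hi, -, hmx⟩ := hx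
  omega

lemma exists_perm (e : Cols3 s ≃ Rows3 n s A B C) (mon : Fin n →₀ ℕ)
    (hAB : Disjoint A B) (hAC : Disjoint A C) (hBC : Disjoint B C)
    (hsum : A.card + B.card + C.card = 2 * s)
    (hmon : ∀ x, x ∉ A ∪ B ∪ C → mon x = 0)
    (hcount : ∀ i < s, ((A ∪ B ∪ C).filter fun x => mon x = i).card = 2)
    (hiA : Set.InjOn mon ↑A) (hiB : Set.InjOn mon ↑B) (hiC : Set.InjOn mon ↑C) :
    ∃ σ : Equiv.Perm (Cols3 s),
      coeff mon (∏ c : Cols3 s, M3 F n s A B C (e (σ c)) c) = 1 := by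
  classical
  set g := gfun n s A B C mon with hgdef
  have hused := used_two mon hAB hAC hBC hcount hiA hiB hiC
  -- injectivity of g
  have hginj : Function.Injective g := by
    intro c1 c2 h
    rcases c1 with t1 | (t1 | t1) <;> rcases c2 with t2 | (t2 | t2) <;>
      simp only [hgdef, gfun] at h <;> split_ifs at h with h1 h2
    -- (A,A)
    · have hch : h1.choose = h2.choose :=
        congrArg Subtype.val (Sum.inl.inj (Sum.inr.inj h))
      have : (t1 : ℕ) = (t2 : ℕ) := by
        rw [← h1.choose_spec.2, hch, h2.choose_spec.2]
      exact congrArg Sum.inl (Fin.ext this)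
    · exact congrArg Sum.inl (Sum.inl.inj h)
    -- (A,B)
    · simp at h
    · rename_i h2
      exfalso
      have ht : t1 = t2 := Sum.inl.inj h
      exact ((hused t1).1).elim h1 (fun hb => h2 (ht ▸ hb))
    -- (A,C)
    · simp at h
    · rename_i h2
      exfalso
      have ht : t1 = t2 := Sum.inl.inj h
      exact ((hused t1).2.1).elim h1 (fun hb => h2 (ht ▸ hb))
    -- (B,A)
    · simp at h
    · rename_i h2
      exfalso
      have ht : t1 = t2 := Sum.inl.inj h
      exact ((hused t1).1).elim (fun hb => h2 (ht ▸ hb)) h1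
    -- (B,B)
    · have hch : h1.choose = h2.choose :=
        congrArg Subtype.val (Sum.inl.inj (Sum.inr.inj (Sum.inr.inj h)))
      have : (t1 : ℕ) = (t2 : ℕ) := by
        rw [← h1.choose_spec.2, hch, h2.choose_spec.2]
      exact congrArg (fun u => Sum.inr (Sum.inl u)) (Fin.ext this)
    · exact congrArg (fun u => Sum.inr (Sum.inl u)) (Sum.inl.inj h)
    -- (B,C)
    · simp at h
    · rename_i h2
      exfalso
      have ht : t1 = t2 := Sum.inl.inj h
      exact ((hused t1).2.2).elim h1 (fun hb => h2 (ht ▸ hb))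
    -- (C,A)
    · simp at h
    · rename_i h2
      exfalso
      have ht : t1 = t2 := Sum.inl.inj h
      exact ((hused t1).2.1).elim (fun hb => h2 (ht ▸ hb)) h1
    -- (C,B)
    · simp at h
    · rename_i h2
      exfalso
      have ht : t1 = t2 := Sum.inl.inj h
      exact ((hused t1).2.2).elim (fun hb => h2 (ht ▸ hb)) h1
    -- (C,C)
    · have hch : h1.choose = h2.choose :=
        congrArg Subtype.val (Sum.inr.inj (Sum.inr.inj (Sum.inr.inj h)))
      have : (t1 : ℕ) = (t2 : ℕ) := by
        rw [← h1.choose_spec.2, hch, h2.choose_spec.2]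
      exact congrArg (fun u => Sum.inr (Sum.inr u)) (Fin.ext this)
    · exact congrArg (fun u => Sum.inr (Sum.inr u)) (Sum.inl.inj h)
  have hcard : Fintype.card (Cols3 s) = Fintype.card (Rows3 n s A B C) := by
    simp only [Cols3, Rows3, Fintype.card_sum, Fintype.card_fin, Fintype.card_coe]
    omega
  have hgbij : Function.Bijective g :=
    (Fintype.bijective_iff_injective_and_card g).mpr ⟨hginj, hcard⟩
  refine ⟨(Equiv.ofBijective g hgbij).trans e.symm, ?_⟩
  have hg : ∀ c, e (((Equiv.ofBijective g hgbij).trans e.symm) c) = g c := fun c => by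
    simp [Equiv.ofBijective]
  have hrw : (∏ c : Cols3 s, M3 F n s A B C (e (((Equiv.ofBijective g hgbij).trans e.symm) c)) c)
      = ∏ c : Cols3 s, M3 F n s A B C (g c) c :=
    Finset.prod_congr rfl (fun c _ => by rw [hg c])
  rw [hrw]
  have hne : ∀ c, M3 F n s A B C (g c) c ≠ 0 := by
    intro c
    rcases c with t | (t | t) <;> simp only [hgdef, gfun] <;> split_ifs <;>
      simp only [M3] <;>
      first
        | exact pow_ne_zero _ (X_ne_zero _)
        | simp
  have hprod : (∏ c : Cols3 s, M3 F n s A B C (g c) c)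
      = monomial (∑ c : Cols3 s, Dent n s A B C (g c) c) 1 := by
    rw [← prod_monomial]
    exact Finset.prod_congr rfl (fun c _ => ent_struct _ _ (hne c))
  have hdeg : (∑ c : Cols3 s, Dent n s A B C (g c) c) = mon := by
    apply Finsupp.ext
    intro x
    rw [Finsupp.finset_sum_apply, Fintype.sum_sum_type, Fintype.sum_sum_type]
    by_cases hxu : x ∈ A ∪ B ∪ C
    case neg =>
      have hx0 : mon x = 0 := hmon x hxu
      rw [hx0]
      have z1 : ∀ t : Fin s, (Dent n s A B C (g (Sum.inl t)) (Sum.inl t)) x = 0 := by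
        intro t
        simp only [hgdef, gfun]
        split_ifs with h
        · simp only [Dent, Finsupp.single_apply]
          rw [if_neg]
          rintro rfl
          exact hxu (Finset.mem_union_left _ (Finset.mem_union_left _ h.choose_spec.1))
        · simp [Dent]
      have z2 : ∀ t : Fin s,
          (Dent n s A B C (g (Sum.inr (Sum.inl t))) (Sum.inr (Sum.inl t))) x = 0 := by
        intro t
        simp only [hgdef, gfun]
        split_ifs with h
        · simp only [Dent, Finsupp.single_apply]
          rw [if_neg]
          rintro rfl
          exact hxu (Finset.mem_union_left _ (Finset.mem_union_right _ h.choose_spec.1))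
        · simp [Dent]
      have z3 : ∀ t : Fin s,
          (Dent n s A B C (g (Sum.inr (Sum.inr t))) (Sum.inr (Sum.inr t))) x = 0 := by
        intro t
        simp only [hgdef, gfun]
        split_ifs with h
        · simp only [Dent, Finsupp.single_apply]
          rw [if_neg]
          rintro rfl
          exact hxu (Finset.mem_union_right _ h.choose_spec.1)
        · simp [Dent]
      simp [z1, z2, z3]
    case pos =>
      have hlt : mon x < s := mon_lt mon hAB hAC hBC hsum hcount x hxu
      rcases Finset.mem_union.mp hxu with hxAB | hxC
      · rcases Finset.mem_union.mp hxAB with hxA | hxB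
        · -- x ∈ A
          have z2 : ∀ t : Fin s,
              (Dent n s A B C (g (Sum.inr (Sum.inl t))) (Sum.inr (Sum.inl t))) x = 0 := by
            intro t
            simp only [hgdef, gfun]
            split_ifs with h
            · simp only [Dent, Finsupp.single_apply]
              rw [if_neg]
              rintro rfl
              exact Finset.disjoint_left.mp hAB hxA h.choose_spec.1
            · simp [Dent]
          have z3 : ∀ t : Fin s,
              (Dent n s A B C (g (Sum.inr (Sum.inr t))) (Sum.inr (Sum.inr t))) x = 0 := by
            intro t
            simp only [hgdef, gfun]
            split_ifs with h
            · simp only [Dent, Finsupp.single_apply]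
              rw [if_neg]
              rintro rfl
              exact Finset.disjoint_left.mp hAC hxA h.choose_spec.1
            · simp [Dent]
          have z1 : (∑ t : Fin s, (Dent n s A B C (g (Sum.inl t)) (Sum.inl t)) x)
              = mon x := by
            rw [Finset.sum_eq_single (⟨mon x, hlt⟩ : Fin s)]
            · simp only [hgdef, gfun]
              rw [dif_pos ⟨x, hxA, rfl⟩]
              have h : ∃ a ∈ A, mon a = ((⟨mon x, hlt⟩ : Fin s) : ℕ) := ⟨x, hxA, rfl⟩
              have hcx : h.choose = x := hiA (Finset.mem_coe.mpr h.choose_spec.1)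
                (Finset.mem_coe.mpr hxA) h.choose_spec.2
              simp [Dent, hcx, Finsupp.single_apply]
            · intro t _ ht
              simp only [hgdef, gfun]
              split_ifs with h
              · simp only [Dent, Finsupp.single_apply]
                rw [if_neg]
                rintro rfl
                apply ht
                apply Fin.ext
                exact h.choose_spec.2.symm
              · simp [Dent]
            · intro h
              exact absurd (Finset.mem_univ _) h
          rw [z1]
          simp [z2, z3]
        · -- x ∈ B
          have z1 : ∀ t : Fin s, (Dent n s A B C (g (Sum.inl t)) (Sum.inl t)) x = 0 := by
            intro t
            simp only [hgdef, gfun]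
            split_ifs with h
            · simp only [Dent, Finsupp.single_apply]
              rw [if_neg]
              rintro rfl
              exact Finset.disjoint_right.mp hAB hxB h.choose_spec.1
            · simp [Dent]
          have z3 : ∀ t : Fin s,
              (Dent n s A B C (g (Sum.inr (Sum.inr t))) (Sum.inr (Sum.inr t))) x = 0 := by
            intro t
            simp only [hgdef, gfun]
            split_ifs with h
            · simp only [Dent, Finsupp.single_apply]
              rw [if_neg]
              rintro rfl
              exact Finset.disjoint_left.mp hBC hxB h.choose_spec.1
            · simp [Dent]
          have z2 : (∑ t : Fin s,
              (Dent n s A B C (g (Sum.inr (Sum.inl t))) (Sum.inr (Sum.inl t))) x)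
              = mon x := by
            rw [Finset.sum_eq_single (⟨mon x, hlt⟩ : Fin s)]
            · simp only [hgdef, gfun]
              rw [dif_pos ⟨x, hxB, rfl⟩]
              have h : ∃ b ∈ B, mon b = ((⟨mon x, hlt⟩ : Fin s) : ℕ) := ⟨x, hxB, rfl⟩
              have hcx : h.choose = x := hiB (Finset.mem_coe.mpr h.choose_spec.1)
                (Finset.mem_coe.mpr hxB) h.choose_spec.2
              simp [Dent, hcx, Finsupp.single_apply]
            · intro t _ ht
              simp only [hgdef, gfun]
              split_ifs with h
              · simp only [Dent, Finsupp.single_apply]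
                rw [if_neg]
                rintro rfl
                apply ht
                apply Fin.ext
                exact h.choose_spec.2.symm
              · simp [Dent]
            · intro h
              exact absurd (Finset.mem_univ _) h
          rw [z2]
          simp [z1, z3]
      · -- x ∈ C
        have z1 : ∀ t : Fin s, (Dent n s A B C (g (Sum.inl t)) (Sum.inl t)) x = 0 := by
          intro t
          simp only [hgdef, gfun]
          split_ifs with h
          · simp only [Dent, Finsupp.single_apply]
            rw [if_neg]
            rintro rfl
            exact Finset.disjoint_right.mp hAC hxC h.choose_spec.1
          · simp [Dent]
        have z2 : ∀ t : Fin s,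
            (Dent n s A B C (g (Sum.inr (Sum.inl t))) (Sum.inr (Sum.inl t))) x = 0 := by
          intro t
          simp only [hgdef, gfun]
          split_ifs with h
          · simp only [Dent, Finsupp.single_apply]
            rw [if_neg]
            rintro rfl
            exact Finset.disjoint_right.mp hBC hxC h.choose_spec.1
          · simp [Dent]
        have z3 : (∑ t : Fin s,
            (Dent n s A B C (g (Sum.inr (Sum.inr t))) (Sum.inr (Sum.inr t))) x)
            = mon x := by
          rw [Finset.sum_eq_single (⟨mon x, hlt⟩ : Fin s)]
          · simp only [hgdef, gfun]
            rw [dif_pos ⟨x, hxC, rfl⟩]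
            have h : ∃ c0 ∈ C, mon c0 = ((⟨mon x, hlt⟩ : Fin s) : ℕ) := ⟨x, hxC, rfl⟩
            have hcx : h.choose = x := hiC (Finset.mem_coe.mpr h.choose_spec.1)
              (Finset.mem_coe.mpr hxC) h.choose_spec.2
            simp [Dent, hcx, Finsupp.single_apply]
          · intro t _ ht
            simp only [hgdef, gfun]
            split_ifs with h
            · simp only [Dent, Finsupp.single_apply]
              rw [if_neg]
              rintro rfl
              apply ht
              apply Fin.ext
              exact h.choose_spec.2.symm
            · simp [Dent]
          · intro h
            exact absurd (Finset.mem_univ _) h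
        rw [z3]
        simp [z1, z2]
  rw [hprod, hdeg, coeff_monomial, if_pos rfl]

end aux


/-- Characterization of the monomials of the determinant of the 3-wise intersection matrix:
a monomial supported on `A ∪ B ∪ C` appears with nonzero coefficient iff its multiset of
exponents contains each integer `0 ≤ i ≤ s-1` exactly twice and the exponents within each of
`A`, `B`, `C` are pairwise distinct; moreover every nonzero coefficient is `±1`. -/
theorem stmt_4 (F : Type*) [Field F] (n s : ℕ) (A B C : Finset (Fin n))
    (hAB : Disjoint A B) (hAC : Disjoint A C) (hBC : Disjoint B C)
    (hsum : A.card + B.card + C.card = 2 * s)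
    (hA : A.card ≤ s) (hB : B.card ≤ s) (hC : C.card ≤ s)
    (e : (Fin s ⊕ (Fin s ⊕ Fin s)) ≃ (Fin s ⊕ ({a // a ∈ A} ⊕ {b // b ∈ B} ⊕ {c // c ∈ C})))
    (mon : Fin n →₀ ℕ) (hmon : ∀ x, x ∉ A ∪ B ∪ C → mon x = 0) :
    (MvPolynomial.coeff mon ((M3 F n s A B C).submatrix e id).det ≠ 0 ↔
      ((∀ i < s, ((A ∪ B ∪ C).filter fun x => mon x = i).card = 2) ∧
        Set.InjOn mon ↑A ∧ Set.InjOn mon ↑B ∧ Set.InjOn mon ↑C)) ∧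
    (MvPolynomial.coeff mon ((M3 F n s A B C).submatrix e id).det = 0 ∨
      MvPolynomial.coeff mon ((M3 F n s A B C).submatrix e id).det = 1 ∨
      MvPolynomial.coeff mon ((M3 F n s A B C).submatrix e id).det = -1) := by
  classical
  have hdet : ((M3 F n s A B C).submatrix e id).det
      = ∑ σ : Equiv.Perm (Cols3 s), Equiv.Perm.sign σ •
          ∏ c : Cols3 s, M3 F n s A B C (e (σ c)) c := by
    rw [Matrix.det_apply]
    rfl
  have hco : coeff mon (((M3 F n s A B C).submatrix e id).det)
      = ∑ σ : Equiv.Perm (Cols3 s), ((Equiv.Perm.sign σ : ℤ)) •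
          coeff mon (∏ c : Cols3 s, M3 F n s A B C (e (σ c)) c) := by
    rw [hdet, coeff_sum]
    refine Finset.sum_congr rfl (fun σ _ => ?_)
    rw [Units.smul_def, coeff_smul]
  by_cases hcond : (∀ i < s, ((A ∪ B ∪ C).filter fun x => mon x = i).card = 2) ∧
      Set.InjOn mon ↑A ∧ Set.InjOn mon ↑B ∧ Set.InjOn mon ↑C
  · obtain ⟨hcount, hiA, hiB, hiC⟩ := hcond
    obtain ⟨σ₀, hσ₀⟩ := exists_perm (F := F) e mon hAB hAC hBC hsum hmon hcount hiA hiB hiC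
    have h1 : coeff mon (((M3 F n s A B C).submatrix e id).det)
        = ((Equiv.Perm.sign σ₀ : ℤ)) • (1 : F) := by
      rw [hco, Finset.sum_eq_single σ₀]
      · rw [hσ₀]
      · intro σ _ hne
        by_cases hz : coeff mon (∏ c : Cols3 s, M3 F n s A B C (e (σ c)) c) = 0
        · rw [hz, smul_zero]
        · exfalso
          obtain ⟨Hσ, Hmσ, -⟩ := term_struct e mon σ hz
          obtain ⟨Hτ, Hmτ, -⟩ := term_struct e mon σ₀ (by rw [hσ₀]; exact one_ne_zero)
          exact hne (uniq_of e mon hAB hAC hBC σ σ₀ Hσ Hmσ Hτ Hmτ)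
      · intro h
        exact absurd (Finset.mem_univ _) h
    have hpm : coeff mon (((M3 F n s A B C).submatrix e id).det) = 1 ∨
        coeff mon (((M3 F n s A B C).submatrix e id).det) = -1 := by
      rcases Int.units_eq_one_or (Equiv.Perm.sign σ₀) with hs1 | hs1 <;> rw [hs1] at h1
      · left; rw [h1]; simp
      · right; rw [h1]; simp
    have hne0 : coeff mon (((M3 F n s A B C).submatrix e id).det) ≠ 0 := by
      rcases hpm with h | h <;> rw [h] <;> simp
    exact ⟨⟨fun _ => ⟨hcount, hiA, hiB, hiC⟩, fun _ => hne0⟩, Or.inr hpm⟩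
  · have hz : coeff mon (((M3 F n s A B C).submatrix e id).det) = 0 := by
      rw [hco]
      refine Finset.sum_eq_zero (fun σ _ => ?_)
      by_cases hz0 : coeff mon (∏ c : Cols3 s, M3 F n s A B C (e (σ c)) c) = 0
      · rw [hz0, smul_zero]
      · exfalso
        obtain ⟨Hσ, Hmσ, -⟩ := term_struct e mon σ hz0
        exact hcond ⟨fun i hi => count_of e mon hAB hAC hBC σ Hσ Hmσ i hi,
          injA_of e mon hAB hAC hBC σ Hσ Hmσ, injB_of e mon hAB hAC hBC σ Hσ Hmσ,
          injC_of e mon hAB hAC hBC σ Hσ Hmσ⟩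
    exact ⟨⟨fun h => absurd hz h, fun h => absurd h hcond⟩, Or.inl hz⟩
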